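/- Let W=(W_1,…,W_n) be i.i.d. Bernoulli(π), π∈(0,1), and f_i, y_i:{0,1}^n→ℝ for each i. Define τ_ADE(f) = (1/n)∑_{i=1}^n E[f_i(W_i=1,W_{−i}) − f_i(W_i=0,W_{−i})] and similarly τ_ADE(y). Then |τ_ADE(f) − τ_ADE(y)| ≤ (nπ(1−π))^{−1/2} · ( ∑_{i=1}^n E[(f_i(W)−y_i(W))^2] )^{1/2}. -/

import Mathlib

open Finset

/-- Product Bernoulli(π) pmf on `{0,1}^n`. -/
noncomputable def pw (n : ℕ) (π : ℝ) (w : Fin n → Bool) : ℝ :=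
  ∏ i, if w i then π else 1 - π

/-- Expectation under `W ~ Bern(π)^n`. -/
noncomputable def Exp (n : ℕ) (π : ℝ) (f : (Fin n → Bool) → ℝ) : ℝ :=
  ∑ w : Fin n → Bool, pw n π w * f w

/-- Average direct effect functional of a family of outcome models. -/
noncomputable def tauADE (n : ℕ) (π : ℝ) (f : Fin n → (Fin n → Bool) → ℝ) : ℝ :=
  (1 / n) * ∑ i, Exp n π
    (fun w => f i (Function.update w i true) - f i (Function.update w i false))

/-- Lipschitz bound for the ADE functional:
`|τ_ADE(f) - τ_ADE(y)| ≤ (nπ(1-π))^{-1/2} (∑_i E[(f_i - y_i)^2])^{1/2}`. -/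
lemma pw_nonneg (n : ℕ) (π : ℝ) (h0 : 0 ≤ π) (h1 : π ≤ 1) (w : Fin n → Bool) :
    0 ≤ pw n π w :=
  Finset.prod_nonneg fun j _ => by by_cases h : w j <;> simp [h] <;> linarith

lemma Exp_sq_nonneg (n : ℕ) (π : ℝ) (h0 : 0 ≤ π) (h1 : π ≤ 1)
    (g : (Fin n → Bool) → ℝ) : 0 ≤ Exp n π (fun w => g w ^ 2) :=
  Finset.sum_nonneg fun w _ => mul_nonneg (pw_nonneg n π h0 h1 w) (sq_nonneg _)

lemma pw_update (n : ℕ) (π : ℝ) (w : Fin n → Bool) (i : Fin n) (b : Bool) :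
    pw n π (Function.update w i b) =
      (if b then π else 1 - π) * ∏ j ∈ univ.erase i, (if w j then π else 1 - π) := by
  unfold pw
  calc (∏ j, if Function.update w i b j then π else 1 - π)
      = ∏ j, Function.update (fun j => if w j then π else 1 - π) i
          (if b then π else 1 - π) j := by
        apply Finset.prod_congr rfl
        intro j _
        rcases eq_or_ne j i with rfl | h
        · simp
        · simp [Function.update_of_ne h]
    _ = _ := by rw [Finset.prod_update_of_mem (mem_univ i)]; rw [Finset.erase_eq]

lemma Exp_coord (n : ℕ) (π : ℝ) (i : Fin n) (ψ : Bool → ℝ) :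
    Exp n π (fun w => ψ (w i)) = π * ψ true + (1 - π) * ψ false := by
  classical
  unfold Exp pw
  have h1 : ∀ w : Fin n → Bool, (∏ j, if w j then π else 1 - π) * ψ (w i)
      = ∏ j, (if w j then π else 1 - π) * (if j = i then ψ (w j) else 1) := by
    intro w
    rw [Finset.prod_mul_distrib]
    congr 1
    rw [Finset.prod_ite_eq' univ i (fun j => ψ (w j))]
    simp
  simp_rw [h1]
  rw [← Fintype.piFinset_univ, ← Finset.prod_univ_sum (fun _ => (univ : Finset Bool)) (fun j b => (if b then π else 1 - π) * (if j = i then ψ b else 1))]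
  have h2 : ∀ j : Fin n,
      (∑ b : Bool, (if b then π else 1 - π) * (if j = i then ψ b else 1))
        = if j = i then π * ψ true + (1 - π) * ψ false else 1 := by
    intro j
    by_cases h : j = i <;> simp [h, Fintype.sum_bool]
  simp_rw [h2]
  rw [Finset.prod_ite_eq' univ i]
  simp

lemma Exp_diff (n : ℕ) (π : ℝ) (hπ : 0 < π) (hπ' : π < 1) (i : Fin n)
    (g : (Fin n → Bool) → ℝ) :
    Exp n π (fun w => g (Function.update w i true) - g (Function.update w i false))
      = Exp n π (fun w => g w * (if w i then 1/π else -(1/(1-π)))) := by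
  classical
  have hπ0 : π ≠ 0 := ne_of_gt hπ
  have h1π : (1:ℝ) - π ≠ 0 := by linarith
  set σ : (Fin n → Bool) → (Fin n → Bool) := fun w => Function.update w i (!(w i)) with hσ
  have hinv : Function.Involutive σ := by
    intro w
    funext j
    rcases eq_or_ne j i with rfl | h
    · simp [σ]
    · simp [σ, Function.update_of_ne h]
  set A : (Fin n → Bool) → ℝ := fun w =>
    pw n π w * (g (Function.update w i true) - g (Function.update w i false)) with hA
  set B : (Fin n → Bool) → ℝ := fun w =>
    pw n π w * (g w * (if w i then 1/π else -(1/(1-π)))) with hB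
  have key : ∀ w, A w + A (σ w) = B w + B (σ w) := by
    intro w
    have hpw : pw n π w
        = (if w i then π else 1 - π) * ∏ j ∈ univ.erase i, (if w j then π else 1 - π) := by
      conv_lhs => rw [← Function.update_eq_self i w]
      exact pw_update n π w i (w i)
    have hpσ : pw n π (σ w)
        = (if !(w i) then π else 1 - π) * ∏ j ∈ univ.erase i, (if w j then π else 1 - π) :=
      pw_update n π w i (!(w i))
    set P : ℝ := ∏ j ∈ univ.erase i, (if w j then π else 1 - π) with hP
    have hσi : (σ w) i = !(w i) := by simp [σ]
    have hu1 : Function.update (σ w) i true = Function.update w i true := by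
      simp [σ, Function.update_idem]
    have hu0 : Function.update (σ w) i false = Function.update w i false := by
      simp [σ, Function.update_idem]
    cases h : w i with
    | true =>
      have hw1 : Function.update w i true = w := by
        conv_lhs => rw [← h]
        exact Function.update_eq_self i w
      have hw0 : Function.update w i false = σ w := by
        rw [hσ]; simp [h]
      simp only [hA, hB, hu1, hu0, hw1, hw0, hpw, hpσ, hσi, h, Bool.not_true,
        if_true, Bool.false_eq_true, if_false]
      field_simp
      ring
    | false =>
      have hw0 : Function.update w i false = w := by
        conv_lhs => rw [← h]
        exact Function.update_eq_self i w
      have hw1 : Function.update w i true = σ w := by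
        rw [hσ]; simp [h]
      simp only [hA, hB, hu1, hu0, hw1, hw0, hpw, hpσ, hσi, h, Bool.not_false,
        if_true, Bool.false_eq_true, if_false]
      field_simp
      ring
  have hsum : ∀ F : (Fin n → Bool) → ℝ, ∑ w, F (σ w) = ∑ w, F w :=
    fun F => Fintype.sum_equiv (hinv.toPerm σ) _ _ (fun w => rfl)
  have h2 : (2:ℝ) * ∑ w, A w = (2:ℝ) * ∑ w, B w := by
    calc (2:ℝ) * ∑ w, A w = ∑ w, A w + ∑ w, A (σ w) := by rw [hsum A]; ring
      _ = ∑ w, (A w + A (σ w)) := (Finset.sum_add_distrib).symm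
      _ = ∑ w, (B w + B (σ w)) := Finset.sum_congr rfl (fun w _ => key w)
      _ = ∑ w, B w + ∑ w, B (σ w) := Finset.sum_add_distrib
      _ = 2 * ∑ w, B w := by rw [hsum B]; ring
  have := mul_left_cancel₀ (two_ne_zero) h2
  exact this

lemma abs_Exp_mul_le (n : ℕ) (π : ℝ) (h0 : 0 ≤ π) (h1 : π ≤ 1)
    (g h : (Fin n → Bool) → ℝ) :
    |Exp n π (fun w => g w * h w)| ≤
      Real.sqrt (Exp n π (fun w => g w ^ 2)) * Real.sqrt (Exp n π (fun w => h w ^ 2)) := by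
  unfold Exp
  have hp : ∀ w, 0 ≤ pw n π w := pw_nonneg n π h0 h1
  have e1 : ∀ w : Fin n → Bool, pw n π w * (g w * h w)
      = (Real.sqrt (pw n π w) * g w) * (Real.sqrt (pw n π w) * h w) := by
    intro w
    linear_combination (-(g w * h w)) * Real.mul_self_sqrt (hp w)
  have e2 : ∀ w : Fin n → Bool, pw n π w * g w ^ 2 = (Real.sqrt (pw n π w) * g w) ^ 2 := by
    intro w
    linear_combination (-(g w ^ 2)) * Real.mul_self_sqrt (hp w)
  have e3 : ∀ w : Fin n → Bool, pw n π w * h w ^ 2 = (Real.sqrt (pw n π w) * h w) ^ 2 := by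
    intro w
    linear_combination (-(h w ^ 2)) * Real.mul_self_sqrt (hp w)
  simp_rw [e1, e2, e3]
  set a : (Fin n → Bool) → ℝ := fun w => Real.sqrt (pw n π w) * g w
  set b : (Fin n → Bool) → ℝ := fun w => Real.sqrt (pw n π w) * h w
  have cs := Finset.sum_mul_sq_le_sq_mul_sq univ a b
  calc |∑ w, a w * b w| = Real.sqrt ((∑ w, a w * b w) ^ 2) := (Real.sqrt_sq_eq_abs _).symm
    _ ≤ Real.sqrt ((∑ w, a w ^ 2) * ∑ w, b w ^ 2) := Real.sqrt_le_sqrt cs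
    _ = _ := Real.sqrt_mul (Finset.sum_nonneg fun w _ => sq_nonneg _) _

theorem stmt5 (n : ℕ) (hn : 1 ≤ n) (π : ℝ) (hπ : 0 < π) (hπ' : π < 1)
    (f y : Fin n → (Fin n → Bool) → ℝ) :
    |tauADE n π f - tauADE n π y| ≤
      (1 / Real.sqrt (n * π * (1 - π))) *
        Real.sqrt (∑ i, Exp n π (fun w => (f i w - y i w) ^ 2)) := by
  classical
  have hπ0 : (0:ℝ) ≤ π := le_of_lt hπ
  have hπ1 : π ≤ 1 := le_of_lt hπ'
  have h1π : (0:ℝ) < 1 - π := by linarith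
  have hn0 : (0:ℝ) < (n:ℝ) := by exact_mod_cast Nat.lt_of_lt_of_le Nat.zero_lt_one hn
  set g : Fin n → (Fin n → Bool) → ℝ := fun i w => f i w - y i w with hg
  set E : Fin n → ℝ := fun i => Exp n π (fun w => g i w ^ 2) with hE
  have hEnn : ∀ i, 0 ≤ E i := fun i => Exp_sq_nonneg n π hπ0 hπ1 (g i)
  set C : ℝ := Real.sqrt (1/(π * (1-π))) with hC
  have hCnn : 0 ≤ C := Real.sqrt_nonneg _
  -- Step 1: express the difference through the score identity
  have hdiff : tauADE n π f - tauADE n π y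
      = (1/(n:ℝ)) * ∑ i, Exp n π (fun w => g i w * (if w i then 1/π else -(1/(1-π)))) := by
    unfold tauADE
    rw [← mul_sub, ← Finset.sum_sub_distrib]
    congr 1
    apply Finset.sum_congr rfl
    intro i _
    have l1 : Exp n π (fun w => f i (Function.update w i true) - f i (Function.update w i false))
        - Exp n π (fun w => y i (Function.update w i true) - y i (Function.update w i false))
        = Exp n π (fun w => g i (Function.update w i true) - g i (Function.update w i false)) := by
      unfold Exp
      rw [← Finset.sum_sub_distrib]
      apply Finset.sum_congr rfl
      intro w _
      simp only [hg]
      ring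
    rw [l1, Exp_diff n π hπ hπ' i (g i)]
  -- Step 2: per-coordinate Cauchy-Schwarz
  have hbound : ∀ i : Fin n,
      |Exp n π (fun w => g i w * (if w i then 1/π else -(1/(1-π))))|
        ≤ Real.sqrt (E i) * C := by
    intro i
    have h1 := abs_Exp_mul_le n π hπ0 hπ1 (g i) (fun w => if w i then 1/π else -(1/(1-π)))
    have h2 := Exp_coord n π i (fun b : Bool => (if b then 1/π else -(1/(1-π)))^2)
    simp only [if_true, Bool.false_eq_true, if_false] at h2
    have h3 : Exp n π (fun w => (if w i then 1/π else -(1/(1-π)))^2) = 1/(π * (1-π)) := by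
      rw [h2]
      field_simp
      ring
    rw [h3] at h1
    exact h1
  -- Step 3: Cauchy-Schwarz over coordinates
  have hsum2 : ∑ i, Real.sqrt (E i) ≤ Real.sqrt n * Real.sqrt (∑ i, E i) := by
    have cs := Finset.sum_mul_sq_le_sq_mul_sq univ (fun _ : Fin n => (1:ℝ))
      (fun i => Real.sqrt (E i))
    simp only [one_mul, one_pow] at cs
    have e : ∑ i : Fin n, Real.sqrt (E i) ^ 2 = ∑ i, E i :=
      Finset.sum_congr rfl fun i _ => Real.sq_sqrt (hEnn i)
    rw [e] at cs
    have hcard : ∑ _i : Fin n, (1:ℝ) = (n:ℝ) := by simp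
    rw [hcard] at cs
    calc ∑ i, Real.sqrt (E i)
        = Real.sqrt ((∑ i, Real.sqrt (E i))^2) :=
          (Real.sqrt_sq (Finset.sum_nonneg fun i _ => Real.sqrt_nonneg _)).symm
      _ ≤ Real.sqrt ((n:ℝ) * ∑ i, E i) := Real.sqrt_le_sqrt cs
      _ = Real.sqrt n * Real.sqrt (∑ i, E i) := Real.sqrt_mul hn0.le _
  -- Step 4: combine
  have hS : ∑ i, Exp n π (fun w => (f i w - y i w) ^ 2) = ∑ i, E i := rfl
  rw [hS, hdiff, abs_mul]
  have habs : |(1/(n:ℝ))| = 1/(n:ℝ) := abs_of_pos (by positivity)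
  rw [habs]
  have step : |∑ i, Exp n π (fun w => g i w * (if w i then 1/π else -(1/(1-π))))|
      ≤ C * (Real.sqrt n * Real.sqrt (∑ i, E i)) := by
    calc |∑ i, Exp n π (fun w => g i w * (if w i then 1/π else -(1/(1-π))))|
        ≤ ∑ i, |Exp n π (fun w => g i w * (if w i then 1/π else -(1/(1-π))))| :=
          Finset.abs_sum_le_sum_abs _ _
      _ ≤ ∑ i, Real.sqrt (E i) * C := Finset.sum_le_sum fun i _ => hbound i
      _ = C * ∑ i, Real.sqrt (E i) := by rw [← Finset.sum_mul]; ring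
      _ ≤ C * (Real.sqrt n * Real.sqrt (∑ i, E i)) := by
          apply mul_le_mul_of_nonneg_left hsum2 hCnn
  have key : (1/(n:ℝ)) * (C * Real.sqrt n) = 1 / Real.sqrt ((n:ℝ) * π * (1 - π)) := by
    have hsn : Real.sqrt n * Real.sqrt n = (n:ℝ) := Real.mul_self_sqrt hn0.le
    have h3 : (0:ℝ) < Real.sqrt n := Real.sqrt_pos.mpr hn0
    have hone : (1/(n:ℝ)) * Real.sqrt n = 1 / Real.sqrt n := by
      field_simp
      exact Real.sq_sqrt hn0.le
    rw [hC, show (1:ℝ)/(π*(1-π)) = (π*(1-π))⁻¹ from one_div _, Real.sqrt_inv,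
      show (n:ℝ)*π*(1-π) = (n:ℝ)*(π*(1-π)) by ring, Real.sqrt_mul hn0.le,
      show (1/(n:ℝ)) * ((Real.sqrt (π*(1-π)))⁻¹ * Real.sqrt n)
        = ((1/(n:ℝ)) * Real.sqrt n) * (Real.sqrt (π*(1-π)))⁻¹ by ring,
      hone, one_div, one_div, mul_inv]
  calc (1/(n:ℝ)) * |∑ i, Exp n π (fun w => g i w * (if w i then 1/π else -(1/(1-π))))|
      ≤ (1/(n:ℝ)) * (C * (Real.sqrt n * Real.sqrt (∑ i, E i))) := by
        apply mul_le_mul_of_nonneg_left step (by positivity)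
    _ = ((1/(n:ℝ)) * (C * Real.sqrt n)) * Real.sqrt (∑ i, E i) := by ring
    _ = (1 / Real.sqrt ((n:ℝ) * π * (1 - π))) * Real.sqrt (∑ i, E i) := by rw [key]
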